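/- Let d ≥ 1, let P be a finite nonempty set of points in ℝ^d, let α > 0, and let p, q be integers with 1 ≤ p ≤ q. Suppose there exist points x₁, …, x_p on the line ℓ such that P is contained in the union of the closed balls B(x_i, r), and set r' = max(r, α/2). Then there exists a feasible solution for the (p ∧ q, α) problem with all p + q centers lying on ℓ and covering radius at most 4r'. -/

import Mathlib

/-- A point of `ℝ^d` lies on the line `ℓ` (the x-axis) iff all coordinates other than the
first vanish. -/
def OnAxis {d : ℕ} (x : EuclideanSpace ℝ (Fin d)) : Prop :=
  ∀ j : Fin d, (j : ℕ) ≠ 0 → x j = 0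

/-- If `p` balls of radius `r` centered on the x-axis cover `P`, then with
`r' = max r (α/2)` there is a feasible solution of the `(p ∧ q, α)` problem with all `p + q`
centers on the x-axis and covering radius at most `4·r'`. -/
theorem stmt5 (d : ℕ) (hd : 1 ≤ d)
    (P : Finset (EuclideanSpace ℝ (Fin d))) (hP : P.Nonempty)
    (α : ℝ) (hα : 0 < α) (p q : ℕ) (hp : 1 ≤ p) (hpq : p ≤ q)
    (r : ℝ) (x : Fin p → EuclideanSpace ℝ (Fin d))
    (hax : ∀ i, OnAxis (x i))
    (hcov : ∀ z ∈ P, ∃ i, dist z (x i) ≤ r) :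
    ∃ (c : Fin p → EuclideanSpace ℝ (Fin d)) (e : Fin q → EuclideanSpace ℝ (Fin d)),
      (∀ i, OnAxis (c i)) ∧ (∀ j, OnAxis (e j)) ∧
      (∀ z ∈ P, ∃ i, dist z (c i) ≤ 4 * max r (α / 2)) ∧
      (∀ z ∈ P, ∃ j, dist z (e j) ≤ 4 * max r (α / 2)) ∧
      (∀ i j, α ≤ dist (c i) (e j)) := by
  set r' : ℝ := max r (α / 2) with hr'def
  have hr'pos : 0 < r' := lt_max_of_lt_right (by linarith)
  set L : ℝ := 4 * r' with hLdef
  have hLpos : 0 < L := by positivity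
  have hrle : r ≤ r' := le_max_left _ _
  have hαle : α / 2 ≤ r' := le_max_right _ _
  -- the index of the first coordinate
  set i0 : Fin d := ⟨0, hd⟩ with hi0
  -- snapping to the grid L·ℤ
  have snap : ∀ s : ℝ, |s - L * round (s / L)| ≤ L / 2 := by
    intro s
    have h1 := abs_sub_round (s / L)
    have h2 : s - L * round (s / L) = L * (s / L - round (s / L)) := by
      field_simp
    rw [h2, abs_mul, abs_of_pos hLpos]
    nlinarith [abs_nonneg (s / L - (round (s / L) : ℝ))]
  have snap2 : ∀ s : ℝ, |s - (L * round ((s - L / 2) / L) + L / 2)| ≤ L / 2 := by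
    intro s
    have h2 : s - (L * round ((s - L / 2) / L) + L / 2)
        = (s - L / 2) - L * round ((s - L / 2) / L) := by ring
    rw [h2]; exact snap (s - L / 2)
  -- separation between the two grids
  have sep : ∀ k k' : ℤ, L / 2 ≤ |L * k - (L * k' + L / 2)| := by
    intro k k'
    rcases le_or_gt (k' + 1) k with h1 | h1
    · have h1' : (k' : ℝ) + 1 ≤ (k : ℝ) := by exact_mod_cast h1
      have : L / 2 ≤ L * k - (L * k' + L / 2) := by nlinarith
      exact this.trans (le_abs_self _)
    · have h1' : (k : ℝ) ≤ (k' : ℝ) := by exact_mod_cast Int.lt_add_one_iff.mp h1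
      have h2 : L * k - (L * k' + L / 2) ≤ -(L / 2) := by nlinarith
      have := neg_abs_le (L * k - (L * k' + L / 2))
      linarith
  -- each x i is the single-coordinate point of its first coordinate
  have hx : ∀ i, x i = EuclideanSpace.single i0 (x i i0) := by
    intro i
    ext j
    by_cases hj : j = i0
    · subst hj; simp [EuclideanSpace.single_apply]
    · rw [EuclideanSpace.single_apply, if_neg hj]
      exact hax i j (fun h => hj (Fin.ext h))
  -- the centers
  refine ⟨fun i => EuclideanSpace.single i0 (L * round (x i i0 / L)),
    fun j => EuclideanSpace.single i0
      (L * round ((x (if h : (j : ℕ) < p then ⟨j, h⟩ else ⟨0, hp⟩) i0 - L / 2) / L) + L / 2),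
    ?_, ?_, ?_, ?_, ?_⟩
  · intro i j hj
    beta_reduce
    rw [EuclideanSpace.single_apply, if_neg (fun h => hj (by rw [h]))]
  · intro i j hj
    beta_reduce
    rw [EuclideanSpace.single_apply, if_neg (fun h => hj (by rw [h]))]
  · intro z hz
    obtain ⟨i, hi⟩ := hcov z hz
    refine ⟨i, ?_⟩
    calc dist z (EuclideanSpace.single i0 (L * round (x i i0 / L)))
        ≤ dist z (x i) + dist (x i) (EuclideanSpace.single i0 (L * round (x i i0 / L))) :=
          dist_triangle _ _ _
      _ ≤ r + L / 2 := by
          gcongr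
          rw [hx i, EuclideanSpace.dist_single_same, Real.dist_eq]
          exact snap _
      _ ≤ 4 * r' := by rw [hLdef]; linarith
  · intro z hz
    obtain ⟨i, hi⟩ := hcov z hz
    refine ⟨⟨(i : ℕ), lt_of_lt_of_le i.isLt hpq⟩, ?_⟩
    have hidx : (if h : ((⟨(i : ℕ), lt_of_lt_of_le i.isLt hpq⟩ : Fin q) : ℕ) < p
        then (⟨((⟨(i : ℕ), lt_of_lt_of_le i.isLt hpq⟩ : Fin q) : ℕ), h⟩ : Fin p)
        else ⟨0, hp⟩) = i := by
      rw [dif_pos i.isLt]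
    beta_reduce
    rw [hidx]
    calc dist z (EuclideanSpace.single i0 (L * round ((x i i0 - L / 2) / L) + L / 2))
        ≤ dist z (x i) +
          dist (x i) (EuclideanSpace.single i0 (L * round ((x i i0 - L / 2) / L) + L / 2)) :=
          dist_triangle _ _ _
      _ ≤ r + L / 2 := by
          gcongr
          rw [hx i, EuclideanSpace.dist_single_same, Real.dist_eq]
          exact snap2 _
      _ ≤ 4 * r' := by rw [hLdef]; linarith
  · intro i j
    beta_reduce
    rw [EuclideanSpace.dist_single_same, Real.dist_eq]
    have := sep (round (x i i0 / L))
      (round ((x (if h : (j : ℕ) < p then ⟨j, h⟩ else ⟨0, hp⟩) i0 - L / 2) / L))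
    have hα2 : α ≤ L / 2 := by rw [hLdef]; linarith
    linarith
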